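/- A DFA A is completely reachable if and only if the iteratively constructed graph Γ(A) is strongly connected. -/

import Mathlib

/-!
Framework: complete deterministic finite automata, reachability of subsets,
defect/excluded/duplicate states of words, and the layered graphs
`Γ₁(A), Γ₂(A), …` of Bondar & Volkov, "A Characterization of Completely
Reachable Automata".
-/

/-- The action of a word on a state: `q · w`. -/
def actWord {Q σ : Type*} (δ : Q → σ → Q) (w : List σ) (q : Q) : Q :=
  w.foldl δ q

/-- The image of a set of states under a word: `P · w`. -/
def actSet {Q σ : Type*} (δ : Q → σ → Q) (w : List σ) (P : Set Q) : Set Q :=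
  actWord δ w '' P

/-- The set `excl(w) = Q \ Q·w` of excluded states of the word `w`. -/
def excl {Q σ : Type*} (δ : Q → σ → Q) (w : List σ) : Set Q :=
  Set.univ \ actSet δ w Set.univ

/-- The defect of the word `w`, i.e. `|Q \ Q·w|`. -/
noncomputable def defect {Q σ : Type*} (δ : Q → σ → Q) (w : List σ) : ℕ :=
  (excl δ w).ncard

/-- The set `dupl(w)` of duplicate states of the word `w`. -/
def dupl {Q σ : Type*} (δ : Q → σ → Q) (w : List σ) : Set Q :=
  {p | ∃ q₁ q₂ : Q, q₁ ≠ q₂ ∧ actWord δ w q₁ = p ∧ actWord δ w q₂ = p}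

/-- A subset `P ⊆ Q` is reachable if `P = Q·w` for some word `w`. -/
def reachableSubset {Q σ : Type*} (δ : Q → σ → Q) (P : Set Q) : Prop :=
  ∃ w : List σ, actSet δ w Set.univ = P

/-- A DFA is completely reachable if every nonempty subset of states is reachable. -/
def completelyReachable {Q σ : Type*} (δ : Q → σ → Q) : Prop :=
  ∀ P : Set Q, P.Nonempty → reachableSubset δ P

/-- A directed graph given by a vertex set and an edge relation. -/
structure DGraph (V : Type*) where
  verts : Set V
  edge : V → V → Prop

/-- Reachability by a directed path in a graph. -/
def GReach {V : Type*} (G : DGraph V) : V → V → Prop :=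
  Relation.ReflTransGen G.edge

/-- A graph is strongly connected if each of its vertices is reachable from
any other one. -/
def StronglyConnected {V : Type*} (G : DGraph V) : Prop :=
  ∀ u ∈ G.verts, ∀ v ∈ G.verts, GReach G u v

/-- The strongly connected component of the vertex `v`: all vertices mutually
reachable with `v`. -/
def scc {V : Type*} (G : DGraph V) (v : V) : Set V :=
  {u | u ∈ G.verts ∧ GReach G u v ∧ GReach G v u}

/-- Vertices of the layered graphs: states (`Sum.inl`) and subsets of states
(`Sum.inr`). -/
abbrev Vtx (Q : Type*) := Q ⊕ Set Q

/-- The support of a set of vertices: the states belonging to it. -/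
def support {Q : Type*} (S : Set (Vtx Q)) : Set Q :=
  {q | Sum.inl q ∈ S}

/-- The graph `Γ₁(A)`: vertices are the states, and there is an edge
`(excl w, dupl w)` for each word `w` of defect 1. -/
def Gamma1 {Q σ : Type*} (δ : Q → σ → Q) : DGraph (Vtx Q) where
  verts := Set.range Sum.inl
  edge := fun u v => ∃ q p : Q, u = Sum.inl q ∧ v = Sum.inl p ∧
    ∃ w : List σ, defect δ w = 1 ∧ excl δ w = {q} ∧ p ∈ dupl δ w

/-- `Qnext G k`: the collection of the supports of all SCCs of `G` of rank
at least `k` (this is the set `Q_k` when `G = Γ_{k-1}(A)`). -/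
def Qnext {Q : Type*} (G : DGraph (Vtx Q)) (k : ℕ) : Set (Set Q) :=
  {C | ∃ v ∈ G.verts, C = support (scc G v) ∧ k ≤ C.ncard}

/-- One step of the iterative construction: from `G = Γ_{k-1}(A)` build
`Γ_k(A)` by adding the new vertices `Q_k`, the inclusion edges `I_k`, and the
edges `E_k` enforced by words of defect `k`. -/
def step {Q σ : Type*} (δ : Q → σ → Q) (G : DGraph (Vtx Q)) (k : ℕ) :
    DGraph (Vtx Q) where
  verts := G.verts ∪ Sum.inr '' Qnext G k
  edge := fun u v =>
    G.edge u v ∨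
    (∃ C ∈ Qnext G k, v = Sum.inr C ∧
      ((∃ q : Q, u = Sum.inl q ∧ q ∈ C) ∨
       (∃ D : Set Q, u = Sum.inr D ∧ Sum.inr D ∈ G.verts ∧ D ⊂ C))) ∨
    (∃ C ∈ Qnext G k, ∃ p : Q, u = Sum.inr C ∧ v = Sum.inl p ∧
      ∃ w : List σ, defect δ w = k ∧ excl δ w ⊆ C ∧ p ∈ dupl δ w)

/-- The layered graphs `Γ_k(A)` (with `Γ_0 := Γ_1`). -/
def Gamma {Q σ : Type*} (δ : Q → σ → Q) : ℕ → DGraph (Vtx Q)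
  | 0 => Gamma1 δ
  | 1 => Gamma1 δ
  | (k + 2) => step δ (Gamma δ (k + 1)) (k + 2)

/-- The FAILURE condition at step `k`: every SCC of `Γ_k(A)` has rank at
most `k`. -/
def failsAt {Q σ : Type*} (δ : Q → σ → Q) (k : ℕ) : Prop :=
  ∀ v ∈ (Gamma δ k).verts, (support (scc (Gamma δ k) v)).ncard ≤ k

/-- The iterative construction stops at step `k` (so `Γ(A) = Γ_k(A)`):
`k` is the first index at which `Γ_k(A)` is strongly connected (SUCCESS) or
every SCC of `Γ_k(A)` has rank at most `k` (FAILURE). -/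
def stopsAt {Q σ : Type*} (δ : Q → σ → Q) (k : ℕ) : Prop :=
  1 ≤ k ∧ (StronglyConnected (Gamma δ k) ∨ failsAt δ k) ∧
    ∀ j, 1 ≤ j → j < k → ¬ StronglyConnected (Gamma δ j) ∧ ¬ failsAt δ j
namespace BVaux

open Set

variable {Q σ : Type*}

/-! ### Basic word lemmas -/

lemma actWord_append (δ : Q → σ → Q) (w₁ w₂ : List σ) (q : Q) :
    actWord δ (w₁ ++ w₂) q = actWord δ w₂ (actWord δ w₁ q) :=
  List.foldl_append

lemma actSet_append (δ : Q → σ → Q) (w₁ w₂ : List σ) (P : Set Q) :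
    actSet δ (w₁ ++ w₂) P = actSet δ w₂ (actSet δ w₁ P) := by
  simp only [actSet, ← Set.image_comp]
  apply Set.image_congr
  intro q _
  exact actWord_append δ w₁ w₂ q

lemma excl_eq_compl (δ : Q → σ → Q) (w : List σ) :
    excl δ w = (actSet δ w Set.univ)ᶜ := by
  simp [excl, Set.compl_eq_univ_diff]

lemma actSet_univ_eq_compl (δ : Q → σ → Q) (w : List σ) :
    actSet δ w Set.univ = (excl δ w)ᶜ := by
  rw [excl_eq_compl, compl_compl]

lemma dupl_subset_image (δ : Q → σ → Q) (w : List σ) :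
    dupl δ w ⊆ actSet δ w Set.univ := by
  rintro p ⟨q₁, q₂, -, h₁, -⟩
  exact ⟨q₁, Set.mem_univ _, h₁⟩

lemma not_mem_excl_of_mem_dupl {δ : Q → σ → Q} {w : List σ} {p : Q}
    (h : p ∈ dupl δ w) : p ∉ excl δ w := by
  rw [excl_eq_compl]
  exact fun hc => hc (dupl_subset_image δ w h)

lemma dupl_nonempty_of_excl_nonempty [Finite Q] {δ : Q → σ → Q} {w : List σ}
    (h : (excl δ w).Nonempty) : (dupl δ w).Nonempty := by
  by_contra hd
  rw [Set.not_nonempty_iff_eq_empty] at hd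
  have hinj : Function.Injective (actWord δ w) := by
    intro a b hab
    by_contra hne
    have : actWord δ w a ∈ dupl δ w := ⟨a, b, hne, rfl, hab.symm⟩
    simp [hd] at this
  have hsurj := Finite.injective_iff_surjective.mp hinj
  obtain ⟨x, hx⟩ := h
  rw [excl_eq_compl] at hx
  obtain ⟨y, hy⟩ := hsurj x
  exact hx ⟨y, Set.mem_univ _, hy⟩

/-- From complete reachability: for every proper subset `E` there is a word with
`excl w = E` and defect `|E|`. -/
lemma exists_excl_eq {δ : Q → σ → Q} (hCR : completelyReachable δ) {E : Set Q}
    (hE : E ≠ Set.univ) : ∃ w : List σ, excl δ w = E ∧ defect δ w = E.ncard := by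
  obtain ⟨w, hw⟩ := hCR Eᶜ (Set.nonempty_compl.mpr hE)
  have hex : excl δ w = E := by rw [excl_eq_compl, hw, compl_compl]
  exact ⟨w, hex, by rw [defect, hex]⟩

end BVaux
namespace BVaux2
open Set BVaux

variable {Q σ : Type*}

lemma gamma_eq_step (δ : Q → σ → Q) {k : ℕ} (hk : 2 ≤ k) :
    Gamma δ k = step δ (Gamma δ (k - 1)) k := by
  obtain ⟨j, rfl⟩ : ∃ j, k = j + 2 := ⟨k - 2, by omega⟩
  rfl

lemma gamma_verts_mono_succ (δ : Q → σ → Q) (k : ℕ) :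
    (Gamma δ k).verts ⊆ (Gamma δ (k + 1)).verts := by
  match k with
  | 0 => exact fun v h => h
  | (k + 1) => exact Set.subset_union_left

lemma gamma_edge_mono_succ (δ : Q → σ → Q) (k : ℕ) {u v : Vtx Q} :
    (Gamma δ k).edge u v → (Gamma δ (k + 1)).edge u v := by
  match k with
  | 0 => exact fun h => h
  | (k + 1) => exact fun h => Or.inl h

lemma gamma_verts_mono (δ : Q → σ → Q) {j k : ℕ} (h : j ≤ k) :
    (Gamma δ j).verts ⊆ (Gamma δ k).verts := by
  induction k with
  | zero => have : j = 0 := by omega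
            subst this; exact fun v h => h
  | succ k ih =>
    rcases Nat.lt_or_ge j (k+1) with h' | h'
    · exact fun v hv => gamma_verts_mono_succ δ k (ih (by omega) hv)
    · have : j = k + 1 := by omega
      subst this; exact fun v h => h

lemma gamma_edge_mono (δ : Q → σ → Q) {j k : ℕ} (h : j ≤ k) {u v : Vtx Q} :
    (Gamma δ j).edge u v → (Gamma δ k).edge u v := by
  induction k with
  | zero => have : j = 0 := by omega
            subst this; exact fun h => h
  | succ k ih =>
    rcases Nat.lt_or_ge j (k+1) with h' | h'
    · exact fun hv => gamma_edge_mono_succ δ k (ih (by omega) hv)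
    · have : j = k + 1 := by omega
      subst this; exact fun h => h

lemma inl_mem_verts (δ : Q → σ → Q) (k : ℕ) (q : Q) :
    Sum.inl q ∈ (Gamma δ k).verts :=
  gamma_verts_mono δ (Nat.zero_le k) ⟨q, rfl⟩

lemma qnext_ncard {G : DGraph (Vtx Q)} {j : ℕ} {C : Set Q} (h : C ∈ Qnext G j) :
    j ≤ C.ncard := by
  obtain ⟨v, -, -, h⟩ := h
  exact h

lemma mem_verts_elim (δ : Q → σ → Q) (k : ℕ) (v : Vtx Q)
    (h : v ∈ (Gamma δ k).verts) :
    (∃ q, v = Sum.inl q) ∨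
      ∃ j, 2 ≤ j ∧ j ≤ k ∧ ∃ C ∈ Qnext (Gamma δ (j - 1)) j, v = Sum.inr C := by
  induction k using Nat.strong_induction_on with
  | _ k ih =>
    match k with
    | 0 => obtain ⟨q, hq⟩ := h; exact Or.inl ⟨q, hq.symm⟩
    | 1 => obtain ⟨q, hq⟩ := h; exact Or.inl ⟨q, hq.symm⟩
    | (k + 2) =>
      rcases h with h | ⟨C, hC, rfl⟩
      · rcases ih (k + 1) (by omega) h with h' | ⟨j, hj2, hjk, hC⟩
        · exact Or.inl h'
        · exact Or.inr ⟨j, hj2, by omega, hC⟩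
      · exact Or.inr ⟨k + 2, by omega, le_rfl, C, hC, rfl⟩

lemma inr_nonempty (δ : Q → σ → Q) [Finite Q] (k : ℕ) (D : Set Q)
    (h : Sum.inr D ∈ (Gamma δ k).verts) : D.Nonempty := by
  rcases mem_verts_elim δ k _ h with ⟨q, hq⟩ | ⟨j, hj2, -, C, hC, hCD⟩
  · exact absurd hq (by simp)
  · obtain rfl : D = C := by injection hCD
    have := qnext_ncard hC
    exact (Set.ncard_pos (Set.toFinite _)).mp (by omega)

lemma inr_qnext_mem_verts (δ : Q → σ → Q) {j k : ℕ} (hj : 2 ≤ j) (hjk : j ≤ k)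
    {C : Set Q} (hC : C ∈ Qnext (Gamma δ (j - 1)) j) :
    Sum.inr C ∈ (Gamma δ k).verts := by
  refine gamma_verts_mono δ hjk ?_
  rw [gamma_eq_step δ hj]
  exact Or.inr ⟨C, hC, rfl⟩

lemma edge_incl (δ : Q → σ → Q) {j k : ℕ} (hj : 2 ≤ j) (hjk : j ≤ k)
    {C : Set Q} (hC : C ∈ Qnext (Gamma δ (j - 1)) j) {q : Q} (hq : q ∈ C) :
    (Gamma δ k).edge (Sum.inl q) (Sum.inr C) := by
  refine gamma_edge_mono δ hjk ?_
  rw [gamma_eq_step δ hj]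
  exact Or.inr (Or.inl ⟨C, hC, rfl, Or.inl ⟨q, rfl, hq⟩⟩)

lemma edge_E (δ : Q → σ → Q) {j k : ℕ} (hj : 2 ≤ j) (hjk : j ≤ k)
    {C : Set Q} (hC : C ∈ Qnext (Gamma δ (j - 1)) j) {p : Q} {w : List σ}
    (hw : defect δ w = j) (hsub : excl δ w ⊆ C) (hp : p ∈ dupl δ w) :
    (Gamma δ k).edge (Sum.inr C) (Sum.inl p) := by
  refine gamma_edge_mono δ hjk ?_
  rw [gamma_eq_step δ hj]
  exact Or.inr (Or.inr ⟨C, hC, p, rfl, rfl, w, hw, hsub, hp⟩)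

lemma edge_elim (δ : Q → σ → Q) (k : ℕ) (u v : Vtx Q)
    (h : (Gamma δ k).edge u v) :
    (Gamma1 δ).edge u v ∨
      ∃ j, 2 ≤ j ∧ j ≤ k ∧
        ((∃ C ∈ Qnext (Gamma δ (j - 1)) j, v = Sum.inr C ∧
            ((∃ q, u = Sum.inl q ∧ q ∈ C) ∨
             ∃ D, u = Sum.inr D ∧ Sum.inr D ∈ (Gamma δ (j - 1)).verts ∧ D ⊂ C)) ∨
         (∃ C ∈ Qnext (Gamma δ (j - 1)) j, ∃ p, u = Sum.inr C ∧ v = Sum.inl p ∧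
            ∃ w : List σ, defect δ w = j ∧ excl δ w ⊆ C ∧ p ∈ dupl δ w)) := by
  induction k using Nat.strong_induction_on with
  | _ k ih =>
    match k with
    | 0 => exact Or.inl h
    | 1 => exact Or.inl h
    | (k + 2) =>
      rcases h with h | h | h
      · rcases ih (k + 1) (by omega) h with h' | ⟨j, hj2, hjk, h'⟩
        · exact Or.inl h'
        · exact Or.inr ⟨j, hj2, by omega, h'⟩
      · exact Or.inr ⟨k + 2, by omega, le_rfl, Or.inl h⟩
      · exact Or.inr ⟨k + 2, by omega, le_rfl, Or.inr h⟩

lemma edge_mem_verts (δ : Q → σ → Q) (k : ℕ) {u v : Vtx Q}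
    (h : (Gamma δ k).edge u v) :
    u ∈ (Gamma δ k).verts ∧ v ∈ (Gamma δ k).verts := by
  rcases edge_elim δ k u v h with h' | ⟨j, hj2, hjk, h'⟩
  · obtain ⟨q, p, rfl, rfl, -⟩ := h'
    exact ⟨inl_mem_verts δ k q, inl_mem_verts δ k p⟩
  · rcases h' with ⟨C, hC, rfl, hsrc⟩ | ⟨C, hC, p, rfl, rfl, -⟩
    · refine ⟨?_, inr_qnext_mem_verts δ hj2 hjk hC⟩
      rcases hsrc with ⟨q, rfl, -⟩ | ⟨D, rfl, hD, -⟩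
      · exact inl_mem_verts δ k q
      · exact gamma_verts_mono δ (by omega) hD
    · exact ⟨inr_qnext_mem_verts δ hj2 hjk hC, inl_mem_verts δ k p⟩

end BVaux2
namespace BVaux3
open Set BVaux BVaux2

variable {Q σ : Type*}

lemma mem_scc_iff {V : Type*} (G : DGraph V) (v u : V) :
    u ∈ scc G v ↔ u ∈ G.verts ∧ GReach G u v ∧ GReach G v u := Iff.rfl

lemma self_mem_scc {V : Type*} (G : DGraph V) {v : V} (h : v ∈ G.verts) :
    v ∈ scc G v := ⟨h, Relation.ReflTransGen.refl, Relation.ReflTransGen.refl⟩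

lemma mem_support_iff {S : Set (Vtx Q)} {q : Q} : q ∈ support S ↔ Sum.inl q ∈ S := Iff.rfl

/-- Existence of a sink SCC inside a closed set of vertices. -/
lemma exists_sink_scc {V : Type*} [Finite V] (G : DGraph V)
    (hEdge : ∀ u v, G.edge u v → v ∈ G.verts)
    (S : Set V) (hS : ∀ u ∈ S, ∀ v, G.edge u v → v ∈ S)
    {u₀ : V} (h0 : u₀ ∈ S) (h0v : u₀ ∈ G.verts) :
    ∃ v₁ ∈ G.verts, scc G v₁ ⊆ S ∧
      ∀ u ∈ scc G v₁, ∀ v, G.edge u v → v ∈ scc G v₁ := by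
  classical
  have reachS : ∀ u ∈ S, ∀ x, GReach G u x → x ∈ S := by
    intro u hu x hx
    induction hx with
    | refl => exact hu
    | tail _ h2 ih2 => exact hS _ ih2 _ h2
  have key : ∀ n u₀, u₀ ∈ S → u₀ ∈ G.verts → ({x | x ∈ G.verts ∧ GReach G u₀ x}).ncard = n →
      ∃ v₁ ∈ G.verts, scc G v₁ ⊆ S ∧
        ∀ u ∈ scc G v₁, ∀ v, G.edge u v → v ∈ scc G v₁ := by
    intro n
    induction n using Nat.strong_induction_on with
    | _ n ih =>
      intro u₀ hu₀S hu₀v hcard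
      by_cases hsink : ∀ u ∈ scc G u₀, ∀ v, G.edge u v → v ∈ scc G u₀
      · refine ⟨u₀, hu₀v, ?_, hsink⟩
        intro x hx
        exact reachS _ hu₀S _ hx.2.2
      · push_neg at hsink
        obtain ⟨u, hu, v, huv, hvn⟩ := hsink
        have hvv : v ∈ G.verts := hEdge _ _ huv
        have hreach : GReach G u₀ v := Relation.ReflTransGen.tail hu.2.2 huv
        have hvS : v ∈ S := reachS _ hu₀S _ hreach
        have hssub : {x | x ∈ G.verts ∧ GReach G v x} ⊂ {x | x ∈ G.verts ∧ GReach G u₀ x} := by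
          constructor
          · rintro x ⟨hxv, hx⟩
            exact ⟨hxv, hreach.trans hx⟩
          · intro hsub
            have : u₀ ∈ {x | x ∈ G.verts ∧ GReach G v x} → False := by
              rintro ⟨-, hvu₀⟩
              exact hvn ⟨hvv, hvu₀, hreach⟩
            exact this (hsub ⟨hu₀v, Relation.ReflTransGen.refl⟩)
        have hlt : ({x | x ∈ G.verts ∧ GReach G v x}).ncard < n := by
          rw [← hcard]
          exact Set.ncard_lt_ncard hssub (Set.toFinite _)
        exact ih _ hlt v hvS hvv rfl
  exact key _ u₀ h0 h0v rfl

/-- If all states lie in one SCC of `Γ_n` and `n < |Q|`, then (assuming complete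
reachability) `Γ_n` is strongly connected. -/
lemma full_scc [Finite Q] {δ : Q → σ → Q} (hCR : completelyReachable δ)
    {n : ℕ} (hn : n < Nat.card Q) {v₁ : Vtx Q} (hv₁ : v₁ ∈ (Gamma δ n).verts)
    (hsup : support (scc (Gamma δ n) v₁) = Set.univ) :
    StronglyConnected (Gamma δ n) := by
  have hstate : ∀ q : Q, Sum.inl q ∈ scc (Gamma δ n) v₁ := by
    intro q
    exact (mem_support_iff).mp (hsup ▸ Set.mem_univ q)
  have key : ∀ u ∈ (Gamma δ n).verts, GReach (Gamma δ n) u v₁ ∧ GReach (Gamma δ n) v₁ u := by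
    intro u hu
    rcases mem_verts_elim δ n u hu with ⟨q, rfl⟩ | ⟨j, hj2, hjn, C, hC, rfl⟩
    · exact ⟨(hstate q).2.1, (hstate q).2.2⟩
    · have hCne : C.Nonempty := by
        have := qnext_ncard hC
        exact (Set.ncard_pos (Set.toFinite _)).mp (by omega)
      obtain ⟨q, hq⟩ := hCne
      constructor
      · -- back: E-edge from C to some duplicate state
        have hjcard : j ≤ C.ncard := qnext_ncard hC
        obtain ⟨E, hE, hEcard⟩ := Set.exists_subset_card_eq hjcard
        have hEne : E ≠ Set.univ := by
          intro hEq
          rw [hEq, Set.ncard_univ] at hEcard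
          omega
        obtain ⟨w, hwex, hwdef⟩ := exists_excl_eq hCR hEne
        have hdup : (dupl δ w).Nonempty := by
          apply dupl_nonempty_of_excl_nonempty
          rw [hwex]
          exact (Set.ncard_pos (Set.toFinite _)).mp (by omega)
        obtain ⟨p, hp⟩ := hdup
        have hedge : (Gamma δ n).edge (Sum.inr C) (Sum.inl p) :=
          edge_E δ hj2 hjn hC (by rw [hwdef, hEcard]) (hwex ▸ hE) hp
        exact Relation.ReflTransGen.head hedge (hstate p).2.1
      · exact Relation.ReflTransGen.tail (hstate q).2.2 (edge_incl δ hj2 hjn hC hq)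
  intro u hu v hv
  exact (key u hu).1.trans (key v hv).2

end BVaux3
namespace BVaux4
open Set BVaux BVaux2 BVaux3

variable {Q σ : Type*}

/-- Key lemma: from a strongly connected component whose support meets `P` but
is not contained in `P`, extract a word avoiding `P` in its excluded states and
duplicating some state of `P`. -/
lemma key_reach [Finite Q] (δ : Q → σ → Q) :
    ∀ k : ℕ, ∀ v ∈ (Gamma δ k).verts, ∀ P : Set Q,
      (support (scc (Gamma δ k) v) ∩ P).Nonempty →
      ¬ support (scc (Gamma δ k) v) ⊆ P →
      ∃ w : List σ, excl δ w ∩ P = ∅ ∧ (dupl δ w ∩ P).Nonempty := by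
  intro k
  induction k using Nat.strong_induction_on with
  | _ k ih =>
    intro v hv P hPC hnsub
    obtain ⟨p, hpC, hpP⟩ := hPC
    obtain ⟨q, hqC, hqP⟩ := Set.not_subset.mp hnsub
    have hpscc : Sum.inl p ∈ scc (Gamma δ k) v := hpC
    have hqscc : Sum.inl q ∈ scc (Gamma δ k) v := hqC
    set Bad : Vtx Q → Prop := Sum.elim (· ∈ P) (fun D => (D ∩ P).Nonempty) with hBad
    have hedge : ∀ a c, (Gamma δ k).edge a c → ¬ Bad a → Bad c →
        ∃ w : List σ, excl δ w ∩ P = ∅ ∧ (dupl δ w ∩ P).Nonempty := by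
      intro a c hac hba hbc
      rcases edge_elim δ k a c hac with h1 | ⟨j, hj2, hjk, hincl | hE⟩
      · obtain ⟨q', p', rfl, rfl, w, hdef, hexcl, hdup⟩ := h1
        refine ⟨w, ?_, ⟨p', hdup, hbc⟩⟩
        rw [hexcl]
        simp only [Set.singleton_inter_eq_empty]
        exact hba
      · obtain ⟨C', hC', rfl, hsrc⟩ := hincl
        obtain ⟨v', hv', hCeq, hcard⟩ := hC'
        have hbc' : (support (scc (Gamma δ (j - 1)) v') ∩ P).Nonempty := hCeq ▸ hbc
        have hnsub' : ¬ support (scc (Gamma δ (j - 1)) v') ⊆ P := by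
          rw [← hCeq]
          rcases hsrc with ⟨q', rfl, hq'⟩ | ⟨D, rfl, hDv, hDC⟩
          · exact fun hsubs => hba (hsubs hq')
          · obtain ⟨d, hd⟩ := inr_nonempty δ (j - 1) D hDv
            exact fun hsubs => hba ⟨d, hd, hsubs (hDC.subset hd)⟩
        exact ih (j - 1) (by omega) v' hv' P hbc' hnsub'
      · obtain ⟨C', hC', p', rfl, rfl, w, hdef, hexcl, hdup⟩ := hE
        refine ⟨w, ?_, ⟨p', hdup, hbc⟩⟩
        have hC'P : C' ∩ P = ∅ := Set.not_nonempty_iff_eq_empty.mp hba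
        exact Set.eq_empty_of_subset_empty (hC'P ▸ Set.inter_subset_inter_left P hexcl)
    have hreach : GReach (Gamma δ k) (Sum.inl q) (Sum.inl p) :=
      hqscc.2.1.trans hpscc.2.2
    have main : ∀ a, GReach (Gamma δ k) a (Sum.inl p) → ¬ Bad a →
        ∃ w : List σ, excl δ w ∩ P = ∅ ∧ (dupl δ w ∩ P).Nonempty := by
      intro a h
      induction h using Relation.ReflTransGen.head_induction_on with
      | refl => exact fun hba => absurd hpP hba
      | @head a' c' h' _ ih2 =>
        intro hba
        by_cases hbc : Bad c'
        · exact hedge _ _ h' hba hbc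
        · exact ih2 hbc
    exact main _ hreach hqP
end BVaux4
namespace BVaux5
open Set BVaux BVaux2 BVaux3 BVaux4

variable {Q σ : Type*}

lemma cr_of_sc [Fintype Q] (δ : Q → σ → Q) (k : ℕ)
    (hSC : StronglyConnected (Gamma δ k)) : completelyReachable δ := by
  have main : ∀ n (P : Set Q), P.Nonempty → Nat.card Q - P.ncard = n →
      reachableSubset δ P := by
    intro n
    induction n using Nat.strong_induction_on with
    | _ n ih =>
      intro P hP hn
      by_cases hPu : P = Set.univ
      · subst hPu
        refine ⟨[], ?_⟩
        have : actWord δ ([] : List σ) = id := rfl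
        rw [actSet, this, Set.image_id]
      · obtain ⟨p₀, hp₀⟩ := hP
        have hvmem := inl_mem_verts δ k p₀
        have hvC : support (scc (Gamma δ k) (Sum.inl p₀)) = Set.univ := by
          apply Set.eq_univ_of_forall
          intro x
          exact (mem_support_iff (Q := Q)).mpr
            ⟨inl_mem_verts δ k x, hSC _ (inl_mem_verts δ k x) _ hvmem,
              hSC _ hvmem _ (inl_mem_verts δ k x)⟩
        obtain ⟨w, hw1, hw2⟩ := key_reach δ k (Sum.inl p₀) hvmem P
          (by rw [hvC, Set.univ_inter]; exact ⟨p₀, hp₀⟩)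
          (by rw [hvC]; exact fun h => hPu (Set.univ_subset_iff.mp h))
        set P' := actWord δ w ⁻¹' P with hP'
        have hPrange : P ⊆ Set.range (actWord δ w) := by
          intro x hx
          have hxe : x ∉ excl δ w := fun hc => by
            have : x ∈ excl δ w ∩ P := ⟨hc, hx⟩
            rw [hw1] at this
            exact this
          rw [excl_eq_compl] at hxe
          obtain ⟨y, -, hy⟩ := not_not.mp hxe
          exact ⟨y, hy⟩
        have himg : actWord δ w '' P' = P := by
          rw [hP', Set.image_preimage_eq_inter_range]
          exact Set.inter_eq_left.mpr hPrange
        obtain ⟨p₁, ⟨q₁, q₂, hq12, h1, h2⟩, hp₁P⟩ := hw2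
        have hq₁P' : q₁ ∈ P' := by rw [hP', Set.mem_preimage, h1]; exact hp₁P
        have hq₂P' : q₂ ∈ P' := by rw [hP', Set.mem_preimage, h2]; exact hp₁P
        have hle : P.ncard ≤ P'.ncard := by
          rw [← himg]
          exact Set.ncard_image_le (Set.toFinite _)
        have hlt : P.ncard < P'.ncard := by
          rcases lt_or_eq_of_le hle with h | h
          · exact h
          · exfalso
            have hinj : Set.InjOn (actWord δ w) P' :=
              Set.injOn_of_ncard_image_eq (by rw [himg, h]) (Set.toFinite _)
            exact hq12 (hinj hq₁P' hq₂P' (h1.trans h2.symm))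
        have hP'card : P'.ncard ≤ Nat.card Q := by
          rw [← Set.ncard_univ]
          exact Set.ncard_le_ncard (Set.subset_univ _) (Set.toFinite _)
        have hmeas : Nat.card Q - P'.ncard < n := by omega
        obtain ⟨w', hw'⟩ := ih _ hmeas P' ⟨q₁, hq₁P'⟩ rfl
        refine ⟨w' ++ w, ?_⟩
        rw [actSet_append, hw']
        exact himg
  intro P hP
  exact main _ P hP rfl

end BVaux5
namespace BVaux6
open Set BVaux BVaux2 BVaux3

variable {Q σ : Type*}

/-- Necessity core: in a completely reachable automaton, if no earlier graph is
strongly connected, then every sink SCC of `Γ_k` has rank at least `k+1`,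
unless `Γ_k` is strongly connected. -/
lemma sink_rank [Fintype Q] {δ : Q → σ → Q} (hCR : completelyReachable δ) :
    ∀ k : ℕ, 1 ≤ k → (∀ j, 1 ≤ j → j < k → ¬ StronglyConnected (Gamma δ j)) →
    ∀ v₀ ∈ (Gamma δ k).verts,
      (∀ u ∈ scc (Gamma δ k) v₀, ∀ v, (Gamma δ k).edge u v → v ∈ scc (Gamma δ k) v₀) →
      k + 1 ≤ (support (scc (Gamma δ k) v₀)).ncard ∨ StronglyConnected (Gamma δ k) := by
  intro k
  induction k using Nat.strong_induction_on with
  | _ k ih =>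
    intro hk1 hH v₀ hv₀ hsink
    set C := support (scc (Gamma δ k) v₀) with hCdef
    by_cases hbig : k + 1 ≤ C.ncard
    · exact Or.inl hbig
    push_neg at hbig
    -- helper: a Qnext set trapped in the sink SCC yields a state of C avoiding E
    have trap : ∀ (j : ℕ) (C'' E : Set Q), 2 ≤ j → j ≤ k →
        C'' ∈ Qnext (Gamma δ (j - 1)) j → Sum.inr C'' ∈ scc (Gamma δ k) v₀ →
        E ⊆ C'' → E.ncard = j → E ≠ Set.univ → ∃ p, p ∈ C ∧ p ∉ E := by
      intro j C'' E hj2 hjk hQ hV hEsub hEcard hEuniv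
      obtain ⟨w, hwex, hwdef⟩ := exists_excl_eq hCR hEuniv
      have hdup : (dupl δ w).Nonempty := by
        apply dupl_nonempty_of_excl_nonempty
        rw [hwex]
        exact (Set.ncard_pos (Set.toFinite _)).mp (by omega)
      obtain ⟨p, hp⟩ := hdup
      have hedge := edge_E δ hj2 hjk hQ (by rw [hwdef, hEcard])
        (by rw [hwex]; exact hEsub) hp
      have hpin : Sum.inl p ∈ scc (Gamma δ k) v₀ := hsink _ hV _ hedge
      refine ⟨p, hpin, fun hc => not_mem_excl_of_mem_dupl hp ?_⟩
      rw [hwex]; exact hc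
    by_cases hCuniv : C = Set.univ
    · -- support is everything: the whole graph is one SCC
      right
      have hstate : ∀ q : Q, Sum.inl q ∈ scc (Gamma δ k) v₀ := by
        intro q
        have : q ∈ C := by rw [hCuniv]; trivial
        exact this
      have hallin : ∀ v ∈ (Gamma δ k).verts, v ∈ scc (Gamma δ k) v₀ := by
        intro v hv
        rcases mem_verts_elim δ k v hv with ⟨q, rfl⟩ | ⟨j, hj2, hjk, C'', hQ, rfl⟩
        · exact hstate q
        · have hne : C''.Nonempty := by
            have := qnext_ncard hQ
            exact (Set.ncard_pos (Set.toFinite _)).mp (by omega)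
          obtain ⟨q, hq⟩ := hne
          exact hsink _ (hstate q) _ (edge_incl δ hj2 hjk hQ hq)
      intro u hu v hv
      exact ((hallin u hu).2.1).trans ((hallin v hv).2.2)
    · exfalso
      rcases Nat.eq_zero_or_pos C.ncard with hm0 | hmpos
      · -- empty support: v₀ is a set vertex with no escape
        have hCempty : C = ∅ := (Set.ncard_eq_zero (Set.toFinite _)).mp hm0
        have hv₀scc := self_mem_scc (Gamma δ k) hv₀
        rcases mem_verts_elim δ k v₀ hv₀ with ⟨q, rfl⟩ | ⟨j, hj2, hjk, C'', hQ, rfl⟩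
        · have hq : q ∈ C := hv₀scc
          rw [hCempty] at hq
          exact hq
        · rcases Nat.lt_or_ge j (Nat.card Q) with hjlt | hjge
          · obtain ⟨E, hEsub, hEcard⟩ := Set.exists_subset_card_eq (qnext_ncard hQ)
            have hEuniv : E ≠ Set.univ := by
              intro h; rw [h, Set.ncard_univ] at hEcard; omega
            obtain ⟨p, hpC, -⟩ := trap j C'' E hj2 hjk hQ hv₀scc hEsub hEcard hEuniv
            rw [hCempty] at hpC
            exact hpC
          · have hj_le : j ≤ C''.ncard := qnext_ncard hQ
            have hC''card : C''.ncard ≤ Nat.card Q := by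
              rw [← Set.ncard_univ]
              exact Set.ncard_le_ncard (Set.subset_univ _) (Set.toFinite _)
            have hC''univ : C'' = Set.univ :=
              Set.eq_of_subset_of_ncard_le (Set.subset_univ _)
                (by rw [Set.ncard_univ]; omega) (Set.toFinite _)
            obtain ⟨v', hv', hCeq, -⟩ := hQ
            have hSC' : StronglyConnected (Gamma δ (j - 1)) := by
              refine full_scc hCR (n := j - 1) (by omega) hv' ?_
              rw [← hCeq]
              exact hC''univ
            exact hH (j - 1) (by omega) (by omega) hSC'
      · rcases Nat.lt_or_ge C.ncard 2 with hm1 | hm2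
        · -- |C| = 1
          obtain ⟨a, ha⟩ := Set.ncard_eq_one.mp (by omega : C.ncard = 1)
          obtain ⟨w, hwex, hwdef⟩ := exists_excl_eq hCR hCuniv
          have hdup : (dupl δ w).Nonempty := by
            apply dupl_nonempty_of_excl_nonempty
            rw [hwex]
            exact (Set.ncard_pos (Set.toFinite _)).mp (by omega)
          obtain ⟨p, hp⟩ := hdup
          have hedge1 : (Gamma1 δ).edge (Sum.inl a) (Sum.inl p) :=
            ⟨a, p, rfl, rfl, w, by rw [hwdef]; omega, by rw [hwex, ha], hp⟩
          have hedgek : (Gamma δ k).edge (Sum.inl a) (Sum.inl p) :=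
            gamma_edge_mono δ hk1 (show (Gamma δ 1).edge _ _ from hedge1)
          have hain : Sum.inl a ∈ scc (Gamma δ k) v₀ := by
            have : a ∈ C := by rw [ha]; exact Set.mem_singleton a
            exact this
          have hpC : p ∈ C := hsink _ hain _ hedgek
          have hpex : p ∉ excl δ w := not_mem_excl_of_mem_dupl hp
          rw [hwex] at hpex
          exact hpex hpC
        · -- 2 ≤ |C| ≤ k
          obtain ⟨q₀, hq₀⟩ := (Set.ncard_pos (Set.toFinite _)).mp (by omega : 0 < C.ncard)
          have hq₀scc : Sum.inl q₀ ∈ scc (Gamma δ k) v₀ := hq₀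
          have hclosed : ∀ u ∈ scc (Gamma δ k) v₀, ∀ v,
              (Gamma δ (C.ncard - 1)).edge u v → v ∈ scc (Gamma δ k) v₀ :=
            fun u hu v hv => hsink _ hu _ (gamma_edge_mono δ (by omega) hv)
          obtain ⟨v₁, hv₁, hsccsub, hsink'⟩ :=
            exists_sink_scc (Gamma δ (C.ncard - 1))
              (fun u v h => (edge_mem_verts δ _ h).2) _ hclosed
              hq₀scc (inl_mem_verts δ _ q₀)
          rcases ih (C.ncard - 1) (by omega) (by omega)
              (fun j hj1 hjlt => hH j hj1 (by omega)) v₁ hv₁ hsink' with hrank | hSC'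
          · have hsub : support (scc (Gamma δ (C.ncard - 1)) v₁) ⊆ C :=
              fun x hx => hsccsub hx
            have hCeq : support (scc (Gamma δ (C.ncard - 1)) v₁) = C :=
              Set.eq_of_subset_of_ncard_le hsub (by omega) (Set.toFinite _)
            have hQ : C ∈ Qnext (Gamma δ (C.ncard - 1)) C.ncard :=
              ⟨v₁, hv₁, hCeq.symm, le_rfl⟩
            have hincl := edge_incl δ hm2 (by omega : C.ncard ≤ k) hQ hq₀
            have hCin : Sum.inr C ∈ scc (Gamma δ k) v₀ := hsink _ hq₀scc _ hincl
            obtain ⟨p, hpC, hpE⟩ := trap C.ncard C C hm2 (by omega) hQ hCin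
              (subset_refl _) rfl hCuniv
            exact hpE hpC
          · exact hH (C.ncard - 1) (by omega) (by omega) hSC'

end BVaux6
/-- Theorem 5, the main result: a DFA `A` is completely
reachable if and only if the iteratively constructed graph `Γ(A)` (the graph
`Γ_k(A)` at the step `k` where the construction stops) is strongly connected. -/
theorem completelyReachable_iff_gamma_strongly_connected
    {Q σ : Type*} [Fintype Q] (δ : Q → σ → Q) :
    completelyReachable δ ↔
      ∃ k : ℕ, stopsAt δ k ∧ StronglyConnected (Gamma δ k) := by
  classical
  constructor
  · intro hCR
    have hP : ∃ k, 1 ≤ k ∧ (StronglyConnected (Gamma δ k) ∨ failsAt δ k) := by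
      refine ⟨Nat.card Q + 1, by omega, Or.inr ?_⟩
      intro v _
      have : (support (scc (Gamma δ (Nat.card Q + 1)) v)).ncard ≤ Nat.card Q := by
        rw [← Set.ncard_univ]
        exact Set.ncard_le_ncard (Set.subset_univ _) (Set.toFinite _)
      omega
    set k₀ := Nat.find hP with hk₀
    have hcond := Nat.find_spec hP
    have hstops : stopsAt δ k₀ := by
      refine ⟨hcond.1, hcond.2, fun j hj1 hjlt => ?_⟩
      have h2 := Nat.find_min hP hjlt
      exact ⟨fun h => h2 ⟨hj1, Or.inl h⟩, fun h => h2 ⟨hj1, Or.inr h⟩⟩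
    refine ⟨k₀, hstops, ?_⟩
    by_contra hnSC
    have hfail : failsAt δ k₀ := hcond.2.resolve_left hnSC
    have hne : ∃ u, u ∈ (Gamma δ k₀).verts := by
      by_contra hempty
      push_neg at hempty
      exact hnSC fun u hu => absurd hu (hempty u)
    obtain ⟨u₀, hu₀⟩ := hne
    obtain ⟨v₁, hv₁, -, hsink⟩ :=
      BVaux3.exists_sink_scc (Gamma δ k₀)
        (fun u v h => (BVaux2.edge_mem_verts δ _ h).2) Set.univ
        (fun _ _ _ _ => trivial) (Set.mem_univ u₀) hu₀
    rcases BVaux6.sink_rank hCR k₀ hcond.1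
        (fun j hj1 hjlt => (hstops.2.2 j hj1 hjlt).1) v₁ hv₁ hsink with hrank | hSC
    · have := hfail v₁ hv₁
      omega
    · exact hnSC hSC
  · rintro ⟨k, -, hSC⟩
    exact BVaux5.cr_of_sc δ k hSC
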